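/- For the exceptional unimodal singularity E₁₂ in Hesse form, f = x³ + y⁷ + z² + xy⁵ ∈ ℂ[[x,y,z]], one has μ(f) = dim_ℂ ℂ[[x,y,z]]/(3x² + y⁵, 7y⁶ + 5xy⁴, 2z) = 12 and τ(f) = dim_ℂ ℂ[[x,y,z]]/(f, 3x² + y⁵, 7y⁶ + 5xy⁴, 2z) = 11; in particular τ(f) = μ(f) − 1. -/

import Mathlib

open MvPowerSeries

open Finsupp

noncomputable section E12
abbrev Rps : Type := MvPowerSeries (Fin 3) ℂ
def ee (a b c : ℕ) : Fin 3 →₀ ℕ := single 0 a + single 1 b + single 2 c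
@[simp] lemma ee_apply0 (a b c : ℕ) : ee a b c 0 = a := by simp [ee, Finsupp.single_apply]
@[simp] lemma ee_apply1 (a b c : ℕ) : ee a b c 1 = b := by simp [ee, Finsupp.single_apply]
@[simp] lemma ee_apply2 (a b c : ℕ) : ee a b c 2 = c := by simp [ee, Finsupp.single_apply]
@[simp] lemma ee_le_iff {a b c : ℕ} {d : Fin 3 →₀ ℕ} :
    ee a b c ≤ d ↔ a ≤ d 0 ∧ b ≤ d 1 ∧ c ≤ d 2 := by
  constructor
  · intro h; exact ⟨by simpa using h 0, by simpa using h 1, by simpa using h 2⟩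
  · rintro ⟨h0, h1, h2⟩ i; fin_cases i <;> simpa
lemma fin3_ext {d e : Fin 3 →₀ ℕ} (h0 : d 0 = e 0) (h1 : d 1 = e 1) (h2 : d 2 = e 2) :
    d = e := by
  ext i
  fin_cases i
  · exact h0
  · exact h1
  · exact h2
@[simp] lemma ee_eq_iff {a b c a' b' c' : ℕ} :
    ee a b c = ee a' b' c' ↔ a = a' ∧ b = b' ∧ c = c' := by
  constructor
  · intro h
    refine ⟨?_, ?_, ?_⟩
    · simpa using congrArg (fun d : Fin 3 →₀ ℕ => d 0) h
    · simpa using congrArg (fun d : Fin 3 →₀ ℕ => d 1) h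
    · simpa using congrArg (fun d : Fin 3 →₀ ℕ => d 2) h
  · rintro ⟨rfl, rfl, rfl⟩; rfl
@[simp] lemma ee_sub_ee (a b c a' b' c' : ℕ) :
    ee a b c - ee a' b' c' = ee (a - a') (b - b') (c - c') :=
  fin3_ext (by simp [tsub_apply]) (by simp [tsub_apply]) (by simp [tsub_apply])
@[simp] lemma sub_ee_apply0 (d : Fin 3 →₀ ℕ) (a b c : ℕ) : (d - ee a b c) 0 = d 0 - a := by
  simp [tsub_apply]
@[simp] lemma sub_ee_apply1 (d : Fin 3 →₀ ℕ) (a b c : ℕ) : (d - ee a b c) 1 = d 1 - b := by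
  simp [tsub_apply]
@[simp] lemma sub_ee_apply2 (d : Fin 3 →₀ ℕ) (a b c : ℕ) : (d - ee a b c) 2 = d 2 - c := by
  simp [tsub_apply]
@[simp] lemma add_ee_apply0 (d : Fin 3 →₀ ℕ) (a b c : ℕ) : (d + ee a b c) 0 = d 0 + a := by simp
@[simp] lemma add_ee_apply1 (d : Fin 3 →₀ ℕ) (a b c : ℕ) : (d + ee a b c) 1 = d 1 + b := by simp
@[simp] lemma add_ee_apply2 (d : Fin 3 →₀ ℕ) (a b c : ℕ) : (d + ee a b c) 2 = d 2 + c := by simp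
def deg (d : Fin 3 →₀ ℕ) : ℕ := d 0 + d 1 + d 2

-- regions
def S0 (d : Fin 3 →₀ ℕ) : Prop := d 2 = 0 ∧ (d 0 = 0 ∧ d 1 ≤ 7 ∨ d 0 = 1 ∧ d 1 ≤ 3)
def S1 (d : Fin 3 →₀ ℕ) : Prop := 1 ≤ d 2
def S2 (d : Fin 3 →₀ ℕ) : Prop := d 2 = 0 ∧ 2 ≤ d 0
def S3 (d : Fin 3 →₀ ℕ) : Prop := d 2 = 0 ∧ d 0 = 1 ∧ 4 ≤ d 1
def S4 (d : Fin 3 →₀ ℕ) : Prop := d 2 = 0 ∧ d 0 = 0 ∧ 8 ≤ d 1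

instance : DecidablePred S0 := fun d => by unfold S0; infer_instance
instance : DecidablePred S1 := fun d => by unfold S1; infer_instance
instance : DecidablePred S2 := fun d => by unfold S2; infer_instance
instance : DecidablePred S3 := fun d => by unfold S3; infer_instance
instance : DecidablePred S4 := fun d => by unfold S4; infer_instance

def lc (d : Fin 3 →₀ ℕ) : ℂ :=
  if 1 ≤ d 2 then 2 else if 2 ≤ d 0 then 3 else if d 0 = 1 then 5 else 147

def pf (f : Rps) (d : Fin 3 →₀ ℕ) : ℂ :=
  if S0 d then 0
  else (coeff d f -
      ((if h : ee 0 5 0 ≤ d then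
          (if S2 (d - ee 0 5 0 + ee 2 0 0) then pf f (d - ee 0 5 0 + ee 2 0 0) else 0)
        else 0)
      + 7 * (if h : ee 0 6 0 ≤ d then
          (if S3 (d - ee 0 6 0 + ee 1 4 0) then pf f (d - ee 0 6 0 + ee 1 4 0) else 0)
        else 0)
      + 25 * (if h : ee 0 9 0 ≤ d then
          (if S4 (d - ee 0 9 0 + ee 0 8 0) then pf f (d - ee 0 9 0 + ee 0 8 0) else 0)
        else 0))) / lc d
termination_by deg d
decreasing_by
  all_goals
    simp only [ee_le_iff, ee_apply0, ee_apply1, ee_apply2] at h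
    simp only [deg, add_ee_apply0, add_ee_apply1, add_ee_apply2,
      sub_ee_apply0, sub_ee_apply1, sub_ee_apply2]
    omega

def corr (f : Rps) (d : Fin 3 →₀ ℕ) : ℂ :=
  (if ee 0 5 0 ≤ d ∧ S2 (d - ee 0 5 0 + ee 2 0 0) then pf f (d - ee 0 5 0 + ee 2 0 0) else 0)
  + 7 * (if ee 0 6 0 ≤ d ∧ S3 (d - ee 0 6 0 + ee 1 4 0) then pf f (d - ee 0 6 0 + ee 1 4 0) else 0)
  + 25 * (if ee 0 9 0 ≤ d ∧ S4 (d - ee 0 9 0 + ee 0 8 0) then pf f (d - ee 0 9 0 + ee 0 8 0) else 0)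

lemma ite_and_ite {P Q : Prop} [Decidable P] [Decidable Q] (x : ℂ) :
    (if P then (if Q then x else 0) else 0) = if P ∧ Q then x else 0 := by
  split_ifs <;> tauto

lemma pf_eq (f : Rps) (d : Fin 3 →₀ ℕ) :
    pf f d = if S0 d then 0 else (coeff d f - corr f d) / lc d := by
  rw [pf, corr]
  congr 1
  rw [dite_eq_ite, dite_eq_ite, dite_eq_ite, ite_and_ite, ite_and_ite, ite_and_ite]


-- generators
def g1 : Rps := (3 : Rps) * X 0 ^ 2 + X 1 ^ 5
def g2 : Rps := (7 : Rps) * X 1 ^ 6 + (5 : Rps) * (X 0 * X 1 ^ 4)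
def g3 : Rps := (2 : Rps) * X 2
def g4 : Rps := (147 : Rps) * X 1 ^ 8 + (25 : Rps) * X 1 ^ 9
def f0 : Rps := X 0 ^ 3 + X 1 ^ 7 + X 2 ^ 2 + X 0 * X 1 ^ 5

lemma ee_single0 (a : ℕ) : ee a 0 0 = single 0 a := by simp [ee]
lemma ee_single1 (b : ℕ) : ee 0 b 0 = single 1 b := by simp [ee]
lemma ee_single2 (c : ℕ) : ee 0 0 c = single 2 c := by simp [ee]

lemma X0_pow (a : ℕ) : (X 0 : Rps) ^ a = monomial (ee a 0 0) 1 := by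
  rw [X_pow_eq, ee_single0]
lemma X1_pow (b : ℕ) : (X 1 : Rps) ^ b = monomial (ee 0 b 0) 1 := by
  rw [X_pow_eq, ee_single1]
lemma X2_pow (c : ℕ) : (X 2 : Rps) ^ c = monomial (ee 0 0 c) 1 := by
  rw [X_pow_eq, ee_single2]
lemma X0X1pow (b : ℕ) : (X 0 : Rps) * X 1 ^ b = monomial (ee 1 b 0) 1 := by
  rw [show (X 0 : Rps) = X 0 ^ 1 by ring, X0_pow, X1_pow, monomial_mul_monomial]
  norm_num
  congr 1
  simp [ee, Finsupp.ext_iff, Finsupp.single_apply]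

lemma cnat_eq (n : ℕ) [n.AtLeastTwo] : (OfNat.ofNat n : Rps) = (C (σ := Fin 3) (R := ℂ)) (OfNat.ofNat n) :=
  (map_ofNat ((C (σ := Fin 3) (R := ℂ))) n).symm

-- coefficient of monomial * q
lemma coeff_mmul (d : Fin 3 →₀ ℕ) (e : Fin 3 →₀ ℕ) (q : Rps) :
    coeff d (monomial e 1 * q) = if e ≤ d then coeff (d - e) q else 0 := by
  rw [coeff_monomial_mul]
  simp

lemma coeff_g1_mul (d : Fin 3 →₀ ℕ) (q : Rps) :
    coeff d (g1 * q) =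
      3 * (if ee 2 0 0 ≤ d then coeff (d - ee 2 0 0) q else 0)
      + (if ee 0 5 0 ≤ d then coeff (d - ee 0 5 0) q else 0) := by
  rw [g1, add_mul, map_add, cnat_eq, mul_assoc, coeff_C_mul, X0_pow, X1_pow,
    coeff_mmul, coeff_mmul]

lemma coeff_g2_mul (d : Fin 3 →₀ ℕ) (q : Rps) :
    coeff d (g2 * q) =
      7 * (if ee 0 6 0 ≤ d then coeff (d - ee 0 6 0) q else 0)
      + 5 * (if ee 1 4 0 ≤ d then coeff (d - ee 1 4 0) q else 0) := by
  rw [g2, add_mul, map_add, cnat_eq, mul_assoc, coeff_C_mul,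
    show (5:Rps) = (C (σ := Fin 3) (R := ℂ)) 5 from cnat_eq 5, mul_assoc, coeff_C_mul, X1_pow, X0X1pow,
    coeff_mmul, coeff_mmul]

lemma coeff_g3_mul (d : Fin 3 →₀ ℕ) (q : Rps) :
    coeff d (g3 * q) =
      2 * (if ee 0 0 1 ≤ d then coeff (d - ee 0 0 1) q else 0) := by
  rw [g3, cnat_eq, mul_assoc, coeff_C_mul,
    show (X 2 : Rps) = X 2 ^ 1 by ring, X2_pow, coeff_mmul]

lemma coeff_g4_mul (d : Fin 3 →₀ ℕ) (q : Rps) :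
    coeff d (g4 * q) =
      147 * (if ee 0 8 0 ≤ d then coeff (d - ee 0 8 0) q else 0)
      + 25 * (if ee 0 9 0 ≤ d then coeff (d - ee 0 9 0) q else 0) := by
  rw [g4, add_mul, map_add, cnat_eq, mul_assoc, coeff_C_mul,
    show (25:Rps) = (C (σ := Fin 3) (R := ℂ)) 25 from cnat_eq 25, mul_assoc, coeff_C_mul,
    X1_pow, X1_pow, coeff_mmul, coeff_mmul]

lemma coeff_f0_mul (d : Fin 3 →₀ ℕ) (q : Rps) :
    coeff d (f0 * q) =
      (if ee 3 0 0 ≤ d then coeff (d - ee 3 0 0) q else 0)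
      + (if ee 0 7 0 ≤ d then coeff (d - ee 0 7 0) q else 0)
      + (if ee 0 0 2 ≤ d then coeff (d - ee 0 0 2) q else 0)
      + (if ee 1 5 0 ≤ d then coeff (d - ee 1 5 0) q else 0) := by
  rw [f0, add_mul, add_mul, add_mul, map_add, map_add, map_add,
    X0_pow, X1_pow, X2_pow, X0X1pow, coeff_mmul, coeff_mmul, coeff_mmul, coeff_mmul]


-- continuation: q's and division
def qq1 (f : Rps) : Rps := fun c => if S1 (c + ee 0 0 1) then pf f (c + ee 0 0 1) else 0
def qq2 (f : Rps) : Rps := fun c => if S2 (c + ee 2 0 0) then pf f (c + ee 2 0 0) else 0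
def qq3 (f : Rps) : Rps := fun c => if S3 (c + ee 1 4 0) then pf f (c + ee 1 4 0) else 0
def qq4 (f : Rps) : Rps := fun c => if S4 (c + ee 0 8 0) then pf f (c + ee 0 8 0) else 0
def rr (f : Rps) : Rps := fun d => if S0 d then coeff d f - corr f d else 0

lemma coeff_qq1 (f : Rps) (c : Fin 3 →₀ ℕ) :
    coeff c (qq1 f) = if S1 (c + ee 0 0 1) then pf f (c + ee 0 0 1) else 0 := rfl
lemma coeff_qq2 (f : Rps) (c : Fin 3 →₀ ℕ) :
    coeff c (qq2 f) = if S2 (c + ee 2 0 0) then pf f (c + ee 2 0 0) else 0 := rfl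
lemma coeff_qq3 (f : Rps) (c : Fin 3 →₀ ℕ) :
    coeff c (qq3 f) = if S3 (c + ee 1 4 0) then pf f (c + ee 1 4 0) else 0 := rfl
lemma coeff_qq4 (f : Rps) (c : Fin 3 →₀ ℕ) :
    coeff c (qq4 f) = if S4 (c + ee 0 8 0) then pf f (c + ee 0 8 0) else 0 := rfl
lemma coeff_rr (f : Rps) (d : Fin 3 →₀ ℕ) :
    coeff d (rr f) = if S0 d then coeff d f - corr f d else 0 := rfl

-- closed forms for the products
lemma lead_term {S : (Fin 3 →₀ ℕ) → Prop} [DecidablePred S] {t : Fin 3 →₀ ℕ}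
    (f : Rps) (d : Fin 3 →₀ ℕ) (hS : S d → t ≤ d) :
    (if t ≤ d then (if S (d - t + t) then pf f (d - t + t) else 0) else 0)
      = if S d then pf f d else 0 := by
  by_cases h : t ≤ d
  · rw [if_pos h, tsub_add_cancel_of_le h]
  · rw [if_neg h, if_neg (fun hs => h (hS hs))]

lemma coeff_g3_qq1 (f : Rps) (d : Fin 3 →₀ ℕ) :
    coeff d (g3 * qq1 f) = if S1 d then 2 * pf f d else 0 := by
  rw [coeff_g3_mul, coeff_qq1, lead_term f d (fun hs => by
    simp only [ee_le_iff]; exact ⟨Nat.zero_le _, Nat.zero_le _, hs⟩)]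
  split_ifs <;> ring

lemma coeff_g1_qq2 (f : Rps) (d : Fin 3 →₀ ℕ) :
    coeff d (g1 * qq2 f) = (if S2 d then 3 * pf f d else 0)
      + (if ee 0 5 0 ≤ d ∧ S2 (d - ee 0 5 0 + ee 2 0 0) then pf f (d - ee 0 5 0 + ee 2 0 0)
          else 0) := by
  rw [coeff_g1_mul, coeff_qq2, coeff_qq2, lead_term f d (fun hs => by
      simp only [ee_le_iff]; exact ⟨hs.2, Nat.zero_le _, Nat.zero_le _⟩),
    ite_and_ite]
  split_ifs <;> ring

lemma coeff_g2_qq3 (f : Rps) (d : Fin 3 →₀ ℕ) :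
    coeff d (g2 * qq3 f) = (if S3 d then 5 * pf f d else 0)
      + 7 * (if ee 0 6 0 ≤ d ∧ S3 (d - ee 0 6 0 + ee 1 4 0) then pf f (d - ee 0 6 0 + ee 1 4 0)
          else 0) := by
  rw [coeff_g2_mul, coeff_qq3, coeff_qq3, lead_term f d (fun hs => by
      simp only [ee_le_iff]; exact ⟨hs.2.1.ge, hs.2.2, Nat.zero_le _⟩),
    ite_and_ite]
  split_ifs <;> ring

lemma coeff_g4_qq4 (f : Rps) (d : Fin 3 →₀ ℕ) :
    coeff d (g4 * qq4 f) = (if S4 d then 147 * pf f d else 0)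
      + 25 * (if ee 0 9 0 ≤ d ∧ S4 (d - ee 0 9 0 + ee 0 8 0) then pf f (d - ee 0 9 0 + ee 0 8 0)
          else 0) := by
  rw [coeff_g4_mul, coeff_qq4, coeff_qq4, lead_term f d (fun hs => by
      simp only [ee_le_iff]; exact ⟨Nat.zero_le _, hs.2.2, Nat.zero_le _⟩),
    ite_and_ite]
  split_ifs <;> ring

theorem division (f : Rps) :
    f = g3 * qq1 f + g1 * qq2 f + g2 * qq3 f + g4 * qq4 f + rr f := by
  ext d
  rw [map_add, map_add, map_add, map_add, coeff_g3_qq1, coeff_g1_qq2, coeff_g2_qq3,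
    coeff_g4_qq4, coeff_rr]
  have hcorr : (if ee 0 5 0 ≤ d ∧ S2 (d - ee 0 5 0 + ee 2 0 0)
        then pf f (d - ee 0 5 0 + ee 2 0 0) else 0)
      + 7 * (if ee 0 6 0 ≤ d ∧ S3 (d - ee 0 6 0 + ee 1 4 0)
        then pf f (d - ee 0 6 0 + ee 1 4 0) else 0)
      + 25 * (if ee 0 9 0 ≤ d ∧ S4 (d - ee 0 9 0 + ee 0 8 0)
        then pf f (d - ee 0 9 0 + ee 0 8 0) else 0) = corr f d := rfl
  rw [pf_eq, lc]
  by_cases h1 : S1 d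
  · have h0 : ¬ S0 d := by simp only [S0, S1] at *; omega
    have h2 : ¬ S2 d := by simp only [S1, S2] at *; omega
    have h3 : ¬ S3 d := by simp only [S1, S3] at *; omega
    have h4 : ¬ S4 d := by simp only [S1, S4] at *; omega
    rw [if_pos h1, if_neg h2, if_neg h3, if_neg h4, if_neg h0, if_neg h0,
      if_pos (show 1 ≤ d 2 from h1)]
    rw [← hcorr]
    ring
  · by_cases h2 : S2 d
    · have h0 : ¬ S0 d := by simp only [S0, S2] at *; omega
      have h3 : ¬ S3 d := by simp only [S2, S3] at *; omega
      have h4 : ¬ S4 d := by simp only [S2, S4] at *; omega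
      rw [if_pos h2, if_neg h1, if_neg h3, if_neg h4, if_neg h0, if_neg h0,
        if_neg (show ¬ 1 ≤ d 2 by simp only [S1] at h1; omega), if_pos h2.2]
      rw [← hcorr]
      ring
    · by_cases h3 : S3 d
      · have h0 : ¬ S0 d := by simp only [S0, S3] at *; omega
        have h4 : ¬ S4 d := by simp only [S3, S4] at *; omega
        rw [if_pos h3, if_neg h1, if_neg h2, if_neg h4, if_neg h0, if_neg h0,
          if_neg (show ¬ 1 ≤ d 2 by simp only [S1] at h1; omega),
          if_neg (show ¬ 2 ≤ d 0 by simp only [S2] at h2; simp only [S3] at h3; omega),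
          if_pos h3.2.1]
        rw [← hcorr]
        ring
      · by_cases h4 : S4 d
        · have h0 : ¬ S0 d := by simp only [S0, S4] at *; omega
          rw [if_pos h4, if_neg h1, if_neg h2, if_neg h3, if_neg h0, if_neg h0,
            if_neg (show ¬ 1 ≤ d 2 by simp only [S1] at h1; omega),
            if_neg (show ¬ 2 ≤ d 0 by simp only [S2] at h2; simp only [S4] at h4; omega),
            if_neg (show ¬ d 0 = 1 by simp only [S4] at h4; omega)]
          rw [← hcorr]
          ring
        · have h0 : S0 d := by simp only [S0, S1, S2, S3, S4] at *; omega
          rw [if_pos h0, if_pos h0, if_neg h1, if_neg h2, if_neg h3, if_neg h4, ← hcorr]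
          ring


-- ===== independence functionals =====
def Jmu : Ideal Rps := Ideal.span {g1, g2, g3}
def Jtau : Ideal Rps := Ideal.span {f0, g1, g2, g3}

lemma vanish_mem {L : Rps → ℂ} (hadd : ∀ x y : Rps, L (x + y) = L x + L y)
    (h1 : ∀ q, L (g1 * q) = 0) (h2 : ∀ q, L (g2 * q) = 0) (h3 : ∀ q, L (g3 * q) = 0) :
    ∀ x ∈ Jmu, L x = 0 := by
  intro x hx
  rw [Jmu, Ideal.mem_span_insert] at hx; obtain ⟨r1, z1, hz1, rfl⟩ := hx
  rw [Ideal.mem_span_insert] at hz1; obtain ⟨r2, z2, hz2, rfl⟩ := hz1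
  rw [Ideal.mem_span_singleton'] at hz2; obtain ⟨r3, rfl⟩ := hz2
  rw [hadd, hadd, mul_comm r1, mul_comm r2, mul_comm r3, h1, h2, h3]; ring

lemma vanish_mem_tau {L : Rps → ℂ} (hadd : ∀ x y : Rps, L (x + y) = L x + L y)
    (h0 : ∀ q, L (f0 * q) = 0)
    (h1 : ∀ q, L (g1 * q) = 0) (h2 : ∀ q, L (g2 * q) = 0) (h3 : ∀ q, L (g3 * q) = 0) :
    ∀ x ∈ Jtau, L x = 0 := by
  intro x hx
  rw [Jtau, Ideal.mem_span_insert] at hx; obtain ⟨r0, z0, hz0, rfl⟩ := hx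
  rw [Ideal.mem_span_insert] at hz0; obtain ⟨r1, z1, hz1, rfl⟩ := hz0
  rw [Ideal.mem_span_insert] at hz1; obtain ⟨r2, z2, hz2, rfl⟩ := hz1
  rw [Ideal.mem_span_singleton'] at hz2; obtain ⟨r3, rfl⟩ := hz2
  rw [hadd, hadd, hadd, mul_comm r0, mul_comm r1, mul_comm r2, mul_comm r3,
    h0, h1, h2, h3]; ring

-- single-coefficient functionals vanish
lemma single_g1 (a b : ℕ) (ha : a ≤ 1) (hb : b ≤ 4) (q : Rps) :
    coeff (ee a b 0) (g1 * q) = 0 := by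
  rw [coeff_g1_mul,
    if_neg (by simp only [ee_le_iff, ee_apply0, ee_apply1, ee_apply2]; omega),
    if_neg (by simp only [ee_le_iff, ee_apply0, ee_apply1, ee_apply2]; omega)]
  ring

lemma single_g2 (a b : ℕ) (hb : b ≤ 4) (hab : a = 0 ∨ b ≤ 3) (q : Rps) :
    coeff (ee a b 0) (g2 * q) = 0 := by
  rw [coeff_g2_mul,
    if_neg (by simp only [ee_le_iff, ee_apply0, ee_apply1, ee_apply2]; omega),
    if_neg (by simp only [ee_le_iff, ee_apply0, ee_apply1, ee_apply2]; omega)]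
  ring

lemma single_g3 (a b : ℕ) (q : Rps) : coeff (ee a b 0) (g3 * q) = 0 := by
  rw [coeff_g3_mul,
    if_neg (by simp only [ee_le_iff, ee_apply0, ee_apply1, ee_apply2]; omega)]
  ring

lemma single_f0 (a b : ℕ) (ha : a ≤ 1) (hb : b ≤ 4) (q : Rps) :
    coeff (ee a b 0) (f0 * q) = 0 := by
  rw [coeff_f0_mul,
    if_neg (by simp only [ee_le_iff, ee_apply0, ee_apply1, ee_apply2]; omega),
    if_neg (by simp only [ee_le_iff, ee_apply0, ee_apply1, ee_apply2]; omega),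
    if_neg (by simp only [ee_le_iff, ee_apply0, ee_apply1, ee_apply2]; omega),
    if_neg (by simp only [ee_le_iff, ee_apply0, ee_apply1, ee_apply2]; omega)]
  ring

lemma single_van (a b : ℕ) (ha : a ≤ 1) (hb : b ≤ 4) (hab : a = 0 ∨ b ≤ 3) :
    ∀ x ∈ Jmu, coeff (ee a b 0) x = 0 :=
  vanish_mem (fun x y => map_add _ x y) (single_g1 a b ha hb) (single_g2 a b hb hab)
    (single_g3 a b)

lemma single_van_tau (a b : ℕ) (ha : a ≤ 1) (hb : b ≤ 4) (hab : a = 0 ∨ b ≤ 3) :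
    ∀ x ∈ Jtau, coeff (ee a b 0) x = 0 :=
  vanish_mem_tau (fun x y => map_add _ x y) (single_f0 a b ha hb) (single_g1 a b ha hb)
    (single_g2 a b hb hab) (single_g3 a b)

-- compound functionals
def L05 (f : Rps) : ℂ := coeff (ee 0 5 0) f - (1/3) * coeff (ee 2 0 0) f
def L06 (f : Rps) : ℂ :=
  coeff (ee 0 6 0) f - (7/5) * coeff (ee 1 4 0) f - (1/3) * coeff (ee 2 1 0) f
def L07 (f : Rps) : ℂ :=
  coeff (ee 0 7 0) f - (7/5) * coeff (ee 1 5 0) f - (1/3) * coeff (ee 2 2 0) f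
    + (7/15) * coeff (ee 3 0 0) f

lemma ee_cond : ∀ a b c a' b' c' : ℕ,
    (ee a b c ≤ ee a' b' c') ↔ (a ≤ a' ∧ b ≤ b' ∧ c ≤ c') := by
  intro _ _ _ _ _ _
  simp only [ee_le_iff, ee_apply0, ee_apply1, ee_apply2]

lemma L05_van : ∀ x ∈ Jmu, L05 x = 0 := by
  refine vanish_mem (fun x y => by simp only [L05, map_add]; ring) ?_ ?_ ?_ <;> intro q <;>
    simp only [L05, coeff_g1_mul, coeff_g2_mul, coeff_g3_mul, ee_cond, ee_sub_ee] <;> norm_num <;> try ring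
lemma L05_van_tau : ∀ x ∈ Jtau, L05 x = 0 := by
  refine vanish_mem_tau (fun x y => by simp only [L05, map_add]; ring) ?_ ?_ ?_ ?_ <;> intro q <;>
    simp only [L05, coeff_f0_mul, coeff_g1_mul, coeff_g2_mul, coeff_g3_mul, ee_cond, ee_sub_ee] <;> norm_num <;> try ring
lemma L06_van : ∀ x ∈ Jmu, L06 x = 0 := by
  refine vanish_mem (fun x y => by simp only [L06, map_add]; ring) ?_ ?_ ?_ <;> intro q <;>
    simp only [L06, coeff_g1_mul, coeff_g2_mul, coeff_g3_mul, ee_cond, ee_sub_ee] <;> norm_num <;> try ring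
lemma L06_van_tau : ∀ x ∈ Jtau, L06 x = 0 := by
  refine vanish_mem_tau (fun x y => by simp only [L06, map_add]; ring) ?_ ?_ ?_ ?_ <;> intro q <;>
    simp only [L06, coeff_f0_mul, coeff_g1_mul, coeff_g2_mul, coeff_g3_mul, ee_cond, ee_sub_ee] <;> norm_num <;> try ring
lemma L07_van : ∀ x ∈ Jmu, L07 x = 0 := by
  refine vanish_mem (fun x y => by simp only [L07, map_add]; ring) ?_ ?_ ?_ <;> intro q <;>
    simp only [L07, coeff_g1_mul, coeff_g2_mul, coeff_g3_mul, ee_cond, ee_sub_ee] <;> norm_num <;> try ring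


-- ===== staircase basis =====
def stair : Fin 12 → (Fin 3 →₀ ℕ) := fun j => ee (j.val / 8) (j.val % 8) 0

def MM (j : Fin 12) : Rps := monomial (stair j) 1

lemma stair_S0 (j : Fin 12) : S0 (stair j) := by
  obtain ⟨n, hn⟩ := j
  simp only [stair, S0, ee_apply0, ee_apply1, ee_apply2]
  exact ⟨by trivial, by omega⟩

lemma coeff_sum_MM (c : Fin 12 → ℂ) (d : Fin 3 →₀ ℕ) :
    coeff d (∑ j, c j • MM j) = ∑ j, c j * (if d = stair j then 1 else 0) := by
  rw [map_sum]
  refine Finset.sum_congr rfl fun j _ => ?_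
  classical
  rw [map_smul, MM, coeff_monomial]
  simp

lemma eval_all (c : Fin 12 → ℂ) (k : Fin 12) :
    coeff (stair k) (∑ j, c j • MM j) = c k := by
  rw [coeff_sum_MM]
  fin_cases k <;> simp [stair, Fin.sum_univ_succ] <;> rfl

lemma eval_off (c : Fin 12 → ℂ) (a b : ℕ) (hab : 2 ≤ a ∨ (a = 1 ∧ 4 ≤ b) ∨ (a = 0 ∧ 8 ≤ b)) :
    coeff (ee a b 0) (∑ j, c j • MM j) = 0 := by
  rw [coeff_sum_MM]
  refine Finset.sum_eq_zero fun j _ => ?_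
  have : ¬ (ee a b 0 = stair j) := by fin_cases j <;> simp [stair] <;> omega
  rw [if_neg this, mul_zero]

-- ===== independence (μ) =====
def vmu : Fin 12 → (Rps ⧸ Jmu) := fun j => Ideal.Quotient.mkₐ ℂ Jmu (MM j)

lemma indep_mu : LinearIndependent ℂ vmu := by
  refine Fintype.linearIndependent_iff.mpr fun c hc => ?_
  have hmem : (∑ j, c j • MM j) ∈ Jmu := by
    have h0 : Ideal.Quotient.mkₐ ℂ Jmu (∑ j, c j • MM j) = 0 := by
      rw [map_sum]; simp_rw [map_smul]; exact hc
    rw [Ideal.Quotient.mkₐ_eq_mk] at h0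
    exact Ideal.Quotient.eq_zero_iff_mem.mp h0
  intro k
  fin_cases k
  · have := single_van 0 0 (by norm_num) (by norm_num) (Or.inl rfl) _ hmem
    rwa [show ee 0 0 0 = stair 0 from rfl, eval_all] at this
  · have := single_van 0 1 (by norm_num) (by norm_num) (Or.inl rfl) _ hmem
    rwa [show ee 0 1 0 = stair 1 from rfl, eval_all] at this
  · have := single_van 0 2 (by norm_num) (by norm_num) (Or.inl rfl) _ hmem
    rwa [show ee 0 2 0 = stair 2 from rfl, eval_all] at this
  · have := single_van 0 3 (by norm_num) (by norm_num) (Or.inl rfl) _ hmem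
    rwa [show ee 0 3 0 = stair 3 from rfl, eval_all] at this
  · have := single_van 0 4 (by norm_num) (by norm_num) (Or.inl rfl) _ hmem
    rwa [show ee 0 4 0 = stair 4 from rfl, eval_all] at this
  · have := L05_van _ hmem
    rw [L05, eval_off c 2 0 (by omega)] at this
    rw [show ee 0 5 0 = stair 5 from rfl, eval_all] at this
    simpa using this
  · have := L06_van _ hmem
    rw [L06, eval_off c 1 4 (by omega), eval_off c 2 1 (by omega)] at this
    rw [show ee 0 6 0 = stair 6 from rfl, eval_all] at this
    simpa using this
  · have := L07_van _ hmem
    rw [L07, eval_off c 1 5 (by omega), eval_off c 2 2 (by omega),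
      eval_off c 3 0 (by omega)] at this
    rw [show ee 0 7 0 = stair 7 from rfl, eval_all] at this
    simpa using this
  · have := single_van 1 0 (by norm_num) (by norm_num) (Or.inr (by norm_num)) _ hmem
    rwa [show ee 1 0 0 = stair 8 from rfl, eval_all] at this
  · have := single_van 1 1 (by norm_num) (by norm_num) (Or.inr (by norm_num)) _ hmem
    rwa [show ee 1 1 0 = stair 9 from rfl, eval_all] at this
  · have := single_van 1 2 (by norm_num) (by norm_num) (Or.inr (by norm_num)) _ hmem
    rwa [show ee 1 2 0 = stair 10 from rfl, eval_all] at this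
  · have := single_van 1 3 (by norm_num) (by norm_num) (Or.inr (by norm_num)) _ hmem
    rwa [show ee 1 3 0 = stair 11 from rfl, eval_all] at this

-- ===== span =====
lemma g1_mem : g1 ∈ Jmu := Ideal.subset_span (by simp)
lemma g2_mem : g2 ∈ Jmu := Ideal.subset_span (by simp)
lemma g3_mem : g3 ∈ Jmu := Ideal.subset_span (by simp)

lemma g4_mem : g4 ∈ Jmu := by
  have h : g4 = (25 * X 1 ^ 4) * g1 + ((21 : Rps) * X 1 ^ 2 - 15 * X 0) * g2 := by
    rw [g1, g2, g4]; ring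
  rw [h]
  exact add_mem (Jmu.mul_mem_left _ g1_mem) (Jmu.mul_mem_left _ g2_mem)

lemma sub_rr_mem {I : Ideal Rps} (hI1 : g1 ∈ I) (hI2 : g2 ∈ I) (hI3 : g3 ∈ I) (hI4 : g4 ∈ I)
    (f : Rps) : f - rr f ∈ I := by
  have h : f - rr f = g3 * qq1 f + g1 * qq2 f + g2 * qq3 f + g4 * qq4 f := by
    nth_rewrite 1 [division f]
    ring
  rw [h]
  exact add_mem (add_mem (add_mem (I.mul_mem_right _ hI3) (I.mul_mem_right _ hI1))
    (I.mul_mem_right _ hI2)) (I.mul_mem_right _ hI4)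

lemma rr_eq_sum (f : Rps) :
    rr f = ∑ j, (fun j => coeff (stair j) (rr f)) j • MM j := by
  ext d
  rw [coeff_sum_MM]
  by_cases h : S0 d
  · have hd : d = ee (d 0) (d 1) (d 2) := fin3_ext (by simp) (by simp) (by simp)
    obtain ⟨h2, h01⟩ := h
    rcases h01 with ⟨h0, h1⟩ | ⟨h0, h1⟩ <;>
    · rw [show d = ee (d 0) (d 1) (d 2) from hd, h0, h2]
      interval_cases hh : (d 1) <;>
        simp [stair, Fin.sum_univ_succ]
  · rw [coeff_rr, if_neg h]
    refine (Finset.sum_eq_zero fun j _ => ?_).symm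
    have : ¬ (d = stair j) := fun hd => h (hd ▸ stair_S0 j)
    rw [if_neg this, mul_zero]

lemma span_mu : ⊤ ≤ Submodule.span ℂ (Set.range vmu) := by
  rintro x -
  obtain ⟨f, rfl⟩ := Ideal.Quotient.mkₐ_surjective ℂ Jmu x
  have h1 : Ideal.Quotient.mkₐ ℂ Jmu f = Ideal.Quotient.mkₐ ℂ Jmu (rr f) := by
    rw [Ideal.Quotient.mkₐ_eq_mk, Ideal.Quotient.eq]
    exact sub_rr_mem g1_mem g2_mem g3_mem g4_mem f
  rw [h1, rr_eq_sum f, map_sum]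
  refine Submodule.sum_mem _ fun j _ => ?_
  rw [map_smul]
  exact Submodule.smul_mem _ _ (Submodule.subset_span ⟨j, rfl⟩)

noncomputable def basis_mu : Module.Basis (Fin 12) ℂ (Rps ⧸ Jmu) := Module.Basis.mk indep_mu span_mu

theorem finrank_mu : Module.finrank ℂ (Rps ⧸ Jmu) = 12 := by
  rw [Module.finrank_eq_card_basis basis_mu, Fintype.card_fin]


-- ===== τ part =====
lemma g1_memt : g1 ∈ Jtau := Ideal.subset_span (by simp)
lemma g2_memt : g2 ∈ Jtau := Ideal.subset_span (by simp)
lemma g3_memt : g3 ∈ Jtau := Ideal.subset_span (by simp)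
lemma f0_memt : f0 ∈ Jtau := Ideal.subset_span (by simp)

lemma g4_memt : g4 ∈ Jtau := by
  have h : g4 = (25 * X 1 ^ 4) * g1 + ((21 : Rps) * X 1 ^ 2 - 15 * X 0) * g2 := by
    rw [g1, g2, g4]; ring
  rw [h]
  exact add_mem (Jtau.mul_mem_left _ g1_memt) (Jtau.mul_mem_left _ g2_memt)

lemma y7_memt : (MM 7 : Rps) ∈ Jtau := by
  have hMM : (MM 7 : Rps) = X 1 ^ 7 := by
    rw [show (MM 7 : Rps) = monomial (ee 0 7 0) 1 from rfl, X1_pow]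
  have key : (2 : Rps) * X 1 ^ 7 = 30 * f0 - 10 * X 0 * g1 - 4 * X 1 * g2 - 15 * X 2 * g3 := by
    rw [f0, g1, g2, g3]; ring
  have h2 : (X 1 : Rps) ^ 7 = (C (σ := Fin 3) (R := ℂ)) 2⁻¹ * ((2 : Rps) * X 1 ^ 7) := by
    rw [show (2 : Rps) = (C (σ := Fin 3) (R := ℂ)) 2 from cnat_eq 2, ← mul_assoc, ← map_mul]
    norm_num
  rw [hMM, h2, key]
  refine Jtau.mul_mem_left _ ?_
  refine sub_mem (sub_mem (sub_mem (Jtau.mul_mem_left _ f0_memt) (Jtau.mul_mem_left _ g1_memt))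
    (Jtau.mul_mem_left _ g2_memt)) (Jtau.mul_mem_left _ g3_memt)

def embt : Fin 11 → Fin 12 := fun i => ⟨i.val + i.val / 7, by omega⟩

def stairt : Fin 11 → (Fin 3 →₀ ℕ) :=
  fun i => ee ((i.val + i.val / 7) / 8) ((i.val + i.val / 7) % 8) 0
def MMt (i : Fin 11) : Rps := monomial (stairt i) 1
lemma MMt_eq (i : Fin 11) : MMt i = MM (embt i) := rfl
def vtau : Fin 11 → (Rps ⧸ Jtau) := fun i => Ideal.Quotient.mkₐ ℂ Jtau (MMt i)

lemma coeff_sum_MMt (c : Fin 11 → ℂ) (d : Fin 3 →₀ ℕ) :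
    coeff d (∑ j, c j • MMt j) = ∑ j, c j * (if d = stairt j then 1 else 0) := by
  rw [map_sum]
  refine Finset.sum_congr rfl fun j _ => ?_
  classical
  rw [map_smul, MMt, coeff_monomial]
  simp

lemma eval_all_t (c : Fin 11 → ℂ) (k : Fin 11) :
    coeff (stairt k) (∑ j, c j • MMt j) = c k := by
  rw [coeff_sum_MMt]
  fin_cases k <;> simp [stairt, Fin.sum_univ_succ] <;> rfl

lemma eval_off_t (c : Fin 11 → ℂ) (a b : ℕ)
    (hab : 2 ≤ a ∨ (a = 1 ∧ 4 ≤ b) ∨ (a = 0 ∧ 7 ≤ b)) :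
    coeff (ee a b 0) (∑ j, c j • MMt j) = 0 := by
  rw [coeff_sum_MMt]
  refine Finset.sum_eq_zero fun j _ => ?_
  have : ¬ (ee a b 0 = stairt j) := by
    fin_cases j <;> simp [stairt] <;> omega
  rw [if_neg this, mul_zero]

lemma indep_tau : LinearIndependent ℂ vtau := by
  refine Fintype.linearIndependent_iff.mpr fun c hc => ?_
  have hmem : (∑ j, c j • MMt j) ∈ Jtau := by
    have h0 : Ideal.Quotient.mkₐ ℂ Jtau (∑ j, c j • MMt j) = 0 := by
      rw [map_sum]; simp_rw [map_smul]; exact hc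
    rw [Ideal.Quotient.mkₐ_eq_mk] at h0
    exact Ideal.Quotient.eq_zero_iff_mem.mp h0
  intro k
  fin_cases k
  · have := single_van_tau 0 0 (by norm_num) (by norm_num) (Or.inl rfl) _ hmem
    rwa [show ee 0 0 0 = stairt 0 from rfl, eval_all_t] at this
  · have := single_van_tau 0 1 (by norm_num) (by norm_num) (Or.inl rfl) _ hmem
    rwa [show ee 0 1 0 = stairt 1 from rfl, eval_all_t] at this
  · have := single_van_tau 0 2 (by norm_num) (by norm_num) (Or.inl rfl) _ hmem
    rwa [show ee 0 2 0 = stairt 2 from rfl, eval_all_t] at this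
  · have := single_van_tau 0 3 (by norm_num) (by norm_num) (Or.inl rfl) _ hmem
    rwa [show ee 0 3 0 = stairt 3 from rfl, eval_all_t] at this
  · have := single_van_tau 0 4 (by norm_num) (by norm_num) (Or.inl rfl) _ hmem
    rwa [show ee 0 4 0 = stairt 4 from rfl, eval_all_t] at this
  · have := L05_van_tau _ hmem
    rw [L05, eval_off_t c 2 0 (by omega)] at this
    rw [show ee 0 5 0 = stairt 5 from rfl, eval_all_t] at this
    simpa using this
  · have := L06_van_tau _ hmem
    rw [L06, eval_off_t c 1 4 (by omega), eval_off_t c 2 1 (by omega)] at this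
    rw [show ee 0 6 0 = stairt 6 from rfl, eval_all_t] at this
    simpa using this
  · have := single_van_tau 1 0 (by norm_num) (by norm_num) (Or.inr (by norm_num)) _ hmem
    rwa [show ee 1 0 0 = stairt 7 from rfl, eval_all_t] at this
  · have := single_van_tau 1 1 (by norm_num) (by norm_num) (Or.inr (by norm_num)) _ hmem
    rwa [show ee 1 1 0 = stairt 8 from rfl, eval_all_t] at this
  · have := single_van_tau 1 2 (by norm_num) (by norm_num) (Or.inr (by norm_num)) _ hmem
    rwa [show ee 1 2 0 = stairt 9 from rfl, eval_all_t] at this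
  · have := single_van_tau 1 3 (by norm_num) (by norm_num) (Or.inr (by norm_num)) _ hmem
    rwa [show ee 1 3 0 = stairt 10 from rfl, eval_all_t] at this

lemma span_tau : ⊤ ≤ Submodule.span ℂ (Set.range vtau) := by
  have hz7 : Ideal.Quotient.mkₐ ℂ Jtau (MM 7) = 0 := by
    rw [Ideal.Quotient.mkₐ_eq_mk]
    exact Ideal.Quotient.eq_zero_iff_mem.mpr y7_memt
  rintro x -
  obtain ⟨f, rfl⟩ := Ideal.Quotient.mkₐ_surjective ℂ Jtau x
  have h1 : Ideal.Quotient.mkₐ ℂ Jtau f = Ideal.Quotient.mkₐ ℂ Jtau (rr f) := by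
    rw [Ideal.Quotient.mkₐ_eq_mk, Ideal.Quotient.eq]
    exact sub_rr_mem g1_memt g2_memt g3_memt g4_memt f
  rw [h1, rr_eq_sum f, map_sum]
  refine Submodule.sum_mem _ fun j _ => ?_
  rw [map_smul]
  by_cases h7 : j = (7 : Fin 12)
  · subst h7
    rw [hz7, smul_zero]
    exact Submodule.zero_mem _
  · refine Submodule.smul_mem _ _ (Submodule.subset_span ?_)
    have hj := j.isLt
    have hj7 : j.val ≠ 7 := fun hh => h7 (Fin.ext hh)
    have hw : ∃ i : Fin 11, embt i = j :=
      ⟨⟨j.val - j.val / 8, by omega⟩, by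
        apply Fin.ext; simp only [embt, Fin.val_mk]; omega⟩
    obtain ⟨i, rfl⟩ := hw
    exact ⟨i, rfl⟩

noncomputable def basis_tau : Module.Basis (Fin 11) ℂ (Rps ⧸ Jtau) := Module.Basis.mk indep_tau span_tau

theorem finrank_tau : Module.finrank ℂ (Rps ⧸ Jtau) = 11 := by
  rw [Module.finrank_eq_card_basis basis_tau, Fintype.card_fin]


end E12


/-- For the exceptional unimodal singularity `E₁₂` in Hesse form,
`f = x³ + y⁷ + z² + xy⁵`, the Milnor number is `μ(f) = 12` and the Tjurina number is
`τ(f) = 11`; in particular `τ(f) = μ(f) - 1`. -/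
theorem milnor_tjurina_E12 :
    Module.finrank ℂ (MvPowerSeries (Fin 3) ℂ ⧸
        (Ideal.span {(3 : MvPowerSeries (Fin 3) ℂ) * X 0 ^ 2 + X 1 ^ 5,
          (7 : MvPowerSeries (Fin 3) ℂ) * X 1 ^ 6
            + (5 : MvPowerSeries (Fin 3) ℂ) * (X 0 * X 1 ^ 4),
          (2 : MvPowerSeries (Fin 3) ℂ) * X 2})) = 12 ∧
    Module.finrank ℂ (MvPowerSeries (Fin 3) ℂ ⧸
        (Ideal.span {X 0 ^ 3 + X 1 ^ 7 + X 2 ^ 2 + X 0 * X 1 ^ 5,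
          (3 : MvPowerSeries (Fin 3) ℂ) * X 0 ^ 2 + X 1 ^ 5,
          (7 : MvPowerSeries (Fin 3) ℂ) * X 1 ^ 6
            + (5 : MvPowerSeries (Fin 3) ℂ) * (X 0 * X 1 ^ 4),
          (2 : MvPowerSeries (Fin 3) ℂ) * X 2})) = 11 := by
  exact ⟨finrank_mu, finrank_tau⟩
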